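/- Suppose σ is an aperiodic homeomorphism of a Cantor set X with a unique minimal set Z. Then σ is chain transitive: for any x, y ∈ X and any ε > 0 there is an ε-chain from x to y. -/

import Mathlib

/-- A nonempty closed invariant set which is minimal among such sets. -/
def IsMinimalSet {X : Type*} [TopologicalSpace X] (σ : X ≃ₜ X) (Y : Set X) : Prop :=
  Y.Nonempty ∧ IsClosed Y ∧ σ '' Y = Y ∧
    ∀ Z : Set X, Z ⊆ Y → Z.Nonempty → IsClosed Z → σ '' Z = Z → Z = Y

/-- An `ε`-chain from `x` to `y`: a finite sequence `x = c 0, c 1, ..., c n = y`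
(of length `n ≥ 1`) with `dist (σ (c i)) (c (i+1)) < ε` for all `i < n`. -/
def EpsChain {X : Type*} [MetricSpace X] (σ : X ≃ₜ X) (ε : ℝ) (x y : X) : Prop :=
  ∃ n : ℕ, 1 ≤ n ∧ ∃ c : ℕ → X, c 0 = x ∧ c n = y ∧
    ∀ i < n, dist (σ (c i)) (c (i + 1)) < ε

/-- `σ` is chain transitive if for any two points and any `ε > 0` there is an
`ε`-chain from one to the other. -/
def ChainTransitive {X : Type*} [MetricSpace X] (σ : X ≃ₜ X) : Prop :=
  ∀ x y : X, ∀ ε : ℝ, 0 < ε → EpsChain σ ε x y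

/-- `σ` is aperiodic: no periodic points. -/
def Aperiodic {X : Type*} [TopologicalSpace X] (σ : X ≃ₜ X) : Prop :=
  ∀ x : X, ∀ n : ℤ, n ≠ 0 → (σ.toEquiv ^ n) x ≠ x

section Aux

variable {X : Type*} [MetricSpace X]

lemma epschain_extend (σ : X ≃ₜ X) {ε : ℝ} {x y y' : X} (h : EpsChain σ ε x y)
    (hd : dist (σ y) y' < ε) : EpsChain σ ε x y' := by
  obtain ⟨n, hn, c, h0, hn', hs⟩ := h
  refine ⟨n + 1, by omega, fun i => if i = n + 1 then y' else c i, ?_, ?_, ?_⟩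
  · simp [h0]
  · simp
  · intro i hi
    rcases Nat.lt_or_ge i n with hlt | hge
    · have h1 : i ≠ n + 1 := by omega
      have h2 : i + 1 ≠ n + 1 := by omega
      simpa [h1, h2, show i ≠ n by omega] using hs i hlt
    · have hieq : i = n := by omega
      subst hieq
      have h1 : i ≠ i + 1 := by omega
      simpa [h1, hn'] using hd

lemma epschain_single (σ : X ≃ₜ X) {ε : ℝ} (hε : 0 < ε) (x : X) :
    EpsChain σ ε x (σ x) := by
  refine ⟨1, le_refl _, fun i => if i = 0 then x else σ x, by simp, by simp, ?_⟩
  intro i hi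
  have : i = 0 := by omega
  subst this
  simpa using hε

lemma epschain_prepend (σ : X ≃ₜ X) {ε : ℝ} (hε : 0 < ε) {x y : X}
    (h : EpsChain σ ε x y) : EpsChain σ ε (σ.symm x) y := by
  obtain ⟨n, hn, c, h0, hn', hs⟩ := h
  refine ⟨n + 1, by omega, fun i => if i = 0 then σ.symm x else c (i - 1), by simp, ?_, ?_⟩
  · simp [hn']
  · intro i hi
    rcases Nat.eq_zero_or_pos i with rfl | hpos
    · simpa [h0] using hε
    · have h1 : i ≠ 0 := by omega
      have h2 : i + 1 ≠ 0 := by omega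
      have h3 : i + 1 - 1 = (i - 1) + 1 := by omega
      have h4 : i - 1 < n := by omega
      simpa [h1, h2, h3] using hs (i - 1) h4

lemma epschain_trans (σ : X ≃ₜ X) {ε : ℝ} {x y z : X}
    (h1 : EpsChain σ ε x y) (h2 : EpsChain σ ε y z) : EpsChain σ ε x z := by
  obtain ⟨n, hn, c, hc0, hcn, hcs⟩ := h1
  obtain ⟨m, hm, d, hd0, hdm, hds⟩ := h2
  refine ⟨n + m, by omega, fun i => if i < n then c i else d (i - n), ?_, ?_, ?_⟩
  · have : (0 : ℕ) < n := by omega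
    simp [this, hc0]
  · have : ¬ n + m < n := by omega
    simp [this, hdm]
  · intro i hi
    rcases Nat.lt_or_ge i n with hlt | hge
    · rcases Nat.lt_or_ge (i + 1) n with hlt2 | hge2
      · simpa [hlt, hlt2] using hcs i hlt
      · have hieq : i + 1 = n := by omega
        have h5 : ¬ (i + 1 < n) := by omega
        have h6 : i + 1 - n = 0 := by omega
        have h7 : d 0 = c (i + 1) := by rw [hd0, hieq, hcn]
        simpa [hlt, h5, h6, h7] using hcs i hlt
    · have h1' : ¬ i < n := by omega
      have h2' : ¬ i + 1 < n := by omega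
      have h3' : i + 1 - n = (i - n) + 1 := by omega
      have h4' : i - n < m := by omega
      simpa [h1', h2', h3'] using hds (i - n) h4'

lemma epschain_replace (σ : X ≃ₜ X) {ε₁ ε : ℝ} {x y y' : X}
    (h : EpsChain σ ε₁ x y) (hd : ε₁ + dist y y' ≤ ε) : EpsChain σ ε x y' := by
  obtain ⟨n, hn, c, h0, hn', hs⟩ := h
  have hε₁ : ε₁ ≤ ε := le_trans (le_add_of_nonneg_right dist_nonneg) hd
  refine ⟨n, hn, fun i => if i = n then y' else c i, ?_, by simp, ?_⟩
  · have : (0 : ℕ) ≠ n := by omega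
    simp [this, h0]
  · intro i hi
    have h1 : i ≠ n := by omega
    rcases Nat.lt_or_ge (i + 1) n with hlt | hge
    · have h2 : i + 1 ≠ n := by omega
      exact lt_of_lt_of_le (by simpa [h1, h2] using hs i hi) hε₁
    · have h2 : i + 1 = n := by omega
      have key : dist (σ (c i)) y' ≤ dist (σ (c i)) (c (i + 1)) + dist y y' := by
        calc dist (σ (c i)) y' ≤ dist (σ (c i)) (c (i + 1)) + dist (c (i + 1)) y' :=
              dist_triangle _ _ _
        _ = dist (σ (c i)) (c (i + 1)) + dist y y' := by rw [h2, hn']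
      have : dist (σ (c i)) y' < ε₁ + dist y y' := lt_of_le_of_lt key
        (by exact add_lt_add_left (hs i hi) _)
      simp only [if_neg h1, if_pos h2]
      calc dist (σ (c i)) y' < ε₁ + dist y y' := this
        _ ≤ ε := hd

lemma image_symm_eq_iff (σ : X ≃ₜ X) (W : Set X) : σ.symm '' W = W ↔ σ '' W = W := by
  constructor <;> intro h
  · conv_lhs => rw [← h]
    rw [← Set.image_comp]
    simp
  · conv_lhs => rw [← h]
    rw [← Set.image_comp]
    simp

lemma minimalset_symm (σ : X ≃ₜ X) (W : Set X) :
    IsMinimalSet σ.symm W ↔ IsMinimalSet σ W := by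
  unfold IsMinimalSet
  simp only [image_symm_eq_iff]

/-- Any nonempty closed forward-invariant set contains a minimal set,
hence contains `Z` when `Z` is the unique minimal set. -/
lemma subset_of_invariant [CompactSpace X] (σ : X ≃ₜ X)
    (Z : Set X) (hZ : IsMinimalSet σ Z) (huniq : ∀ W : Set X, IsMinimalSet σ W → W = Z)
    (K : Set X) (hKne : K.Nonempty) (hKc : IsClosed K) (hKi : σ '' K ⊆ K) : Z ⊆ K := by
  set S : Set (Set X) := {W | W ⊆ K ∧ W.Nonempty ∧ IsClosed W ∧ σ '' W ⊆ W} with hS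
  have hchaincond : ∀ c ⊆ S, IsChain (· ⊆ ·) c → c.Nonempty →
      ∃ lb ∈ S, ∀ s ∈ c, lb ⊆ s := by
    intro c hcS hchain hcne
    haveI : Nonempty c := hcne.to_subtype
    have hne : (⋂₀ c).Nonempty := by
      rw [Set.sInter_eq_iInter]
      apply IsCompact.nonempty_iInter_of_directed_nonempty_isCompact_isClosed
      · intro A B
        rcases hchain.total A.2 B.2 with h | h
        · exact ⟨A, Set.Subset.rfl, h⟩
        · exact ⟨B, h, Set.Subset.rfl⟩
      · exact fun W => (hcS W.2).2.1
      · exact fun W => (hcS W.2).2.2.1.isCompact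
      · exact fun W => (hcS W.2).2.2.1
    obtain ⟨W0, hW0⟩ := hcne
    refine ⟨⋂₀ c, ⟨(Set.sInter_subset_of_mem hW0).trans (hcS hW0).1, hne,
      isClosed_sInter fun W hW => (hcS hW).2.2.1, ?_⟩, fun s hs => Set.sInter_subset_of_mem hs⟩
    rintro p ⟨q, hq, rfl⟩
    intro W hW
    exact (hcS hW).2.2.2 ⟨q, hq W hW, rfl⟩
  obtain ⟨m, hmK, hm⟩ := zorn_superset_nonempty S hchaincond K ⟨Set.Subset.rfl, hKne, hKc, hKi⟩
  obtain ⟨hmK', hmne, hmcl, hminv⟩ := hm.prop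
  have heq : σ '' m = m := by
    have hmem : σ '' m ∈ S :=
      ⟨hminv.trans hmK', hmne.image σ, σ.isClosedMap _ hmcl, Set.image_mono hminv⟩
    exact le_antisymm hminv (hm.2 hmem hminv)
  have hmin : IsMinimalSet σ m := by
    refine ⟨hmne, hmcl, heq, fun W hWm hWne hWcl hWinv => ?_⟩
    exact le_antisymm hWm (hm.2 ⟨hWm.trans hmK', hWne, hWcl, hWinv.le⟩ hWm)
  have hmz := huniq m hmin
  exact hmz ▸ hmK'

end Aux

theorem stmt12 {X : Type*} [MetricSpace X] [CompactSpace X] [TotallyDisconnectedSpace X]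
    (hperf : Perfect (Set.univ : Set X))
    (σ : X ≃ₜ X) (hap : Aperiodic σ)
    (Z : Set X) (hZ : IsMinimalSet σ Z) (huniq : ∀ W : Set X, IsMinimalSet σ W → W = Z) :
    ChainTransitive σ := by
  intro x y ε hε
  have hε2 : 0 < ε / 2 := by linarith
  have hε4 : 0 < ε / 4 := by linarith
  obtain ⟨z, hz⟩ := hZ.1
  set R : Set X := {w | EpsChain σ (ε / 2) x w} with hR
  have hRne : R.Nonempty := ⟨σ x, epschain_single σ hε2 x⟩
  have hRfwd : σ '' R ⊆ R := by
    rintro p ⟨q, hq, rfl⟩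
    exact epschain_extend σ hq (by simpa using hε2)
  have hRinv : σ '' closure R ⊆ closure R :=
    (image_closure_subset_closure_image σ.continuous).trans (closure_mono hRfwd)
  have hZR : Z ⊆ closure R :=
    subset_of_invariant σ Z hZ huniq _ (hRne.mono subset_closure) isClosed_closure hRinv
  set B : Set X := {w | EpsChain σ ε w y} with hB
  have hBne : B.Nonempty := by
    refine ⟨σ.symm y, ⟨1, le_refl _, fun i => if i = 0 then σ.symm y else y, by simp, by simp, ?_⟩⟩
    intro i hi
    have : i = 0 := by omega
    subst this
    simpa using hε
  have hBfwd : σ.symm '' B ⊆ B := by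
    rintro p ⟨q, hq, rfl⟩
    exact epschain_prepend σ hε hq
  have hBinv : σ.symm '' closure B ⊆ closure B :=
    (image_closure_subset_closure_image σ.symm.continuous).trans (closure_mono hBfwd)
  have hZB : Z ⊆ closure B := by
    refine subset_of_invariant σ.symm Z ((minimalset_symm σ Z).mpr hZ)
      (fun W hW => huniq W ((minimalset_symm σ W).mp hW)) _
      (hBne.mono subset_closure) isClosed_closure hBinv
  obtain ⟨z', hz'R, hz'd⟩ := Metric.mem_closure_iff.mp (hZR hz) (ε / 4) hε4
  obtain ⟨b, hbB, hbd⟩ := Metric.mem_closure_iff.mp (hZB hz) (ε / 4) hε4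
  have hxb : EpsChain σ ε x b := by
    refine epschain_replace σ hz'R ?_
    have : dist z' b ≤ dist z' z + dist z b := dist_triangle _ _ _
    have h1 : dist z' z < ε / 4 := by rw [dist_comm]; exact hz'd
    linarith
  exact epschain_trans σ hxb hbB
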